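/- Fix Δx, Δy > 0. Let D_x^±(η) = Σ_{j=0}^{3} a_j^± φ_j(η) and D_y^±(ξ) = Σ_{j=0}^{3} b_j^± φ_j(ξ) be degree-3 face polynomials satisfying the compatibility condition (a₀⁺ − a₀⁻)Δy + (b₀⁺ − b₀⁻)Δx = 0, and let ω₁ ∈ ℝ. Then there exists exactly one vector field D = (Dx, Dy) on [−1/2,1/2]² with Dx in the span of { φ_i(ξ)φ_j(η) : i+j ≤ 4, j ≤ 3 } with zero coefficients on φ₃(ξ)φ₁(η) and φ₂(ξ)φ₂(η), and Dy in the span of { φ_i(ξ)φ_j(η) : i+j ≤ 4, i ≤ 3 } with zero coefficients on φ₂(ξ)φ₂(η) and φ₁(ξ)φ₃(η), such that: (i) Dx(±1/2, η) = D_x^±(η) for all η and Dy(ξ, ±1/2) = D_y^±(ξ) for all ξ; (ii) (1/Δx)∂_ξ Dx + (1/Δy)∂_η Dy ≡ 0 on [−1/2,1/2]²; and (iii) 12 ∬_{[−1/2,1/2]²} [ Dy·ξ − Dx·η ] dξ dη = ω₁. -/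

import Mathlib

/-- The orthogonal basis polynomials on `[-1/2, 1/2]`. -/
noncomputable def phi : ℕ → ℝ → ℝ
  | 0, _ => 1
  | 1, x => x
  | 2, x => x ^ 2 - 1 / 12
  | 3, x => x ^ 3 - 3 / 20 * x
  | 4, x => x ^ 4 - 3 / 14 * x ^ 2 + 3 / 560
  | 5, x => x ^ 5 - 5 / 18 * x ^ 3 + 5 / 336 * x
  | _, _ => 0


noncomputable def DXF (c : ℕ → ℕ → ℝ) : ℝ × ℝ → ℝ := fun p =>
  c 0 0 * (phi 0 p.1 * phi 0 p.2) + c 0 1 * (phi 0 p.1 * phi 1 p.2) +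
  c 0 2 * (phi 0 p.1 * phi 2 p.2) + c 0 3 * (phi 0 p.1 * phi 3 p.2) +
  c 1 0 * (phi 1 p.1 * phi 0 p.2) + c 1 1 * (phi 1 p.1 * phi 1 p.2) +
  c 1 2 * (phi 1 p.1 * phi 2 p.2) + c 1 3 * (phi 1 p.1 * phi 3 p.2) +
  c 2 0 * (phi 2 p.1 * phi 0 p.2) + c 2 1 * (phi 2 p.1 * phi 1 p.2) +
  c 3 0 * (phi 3 p.1 * phi 0 p.2) + c 4 0 * (phi 4 p.1 * phi 0 p.2)

noncomputable def DYF (d : ℕ → ℕ → ℝ) : ℝ × ℝ → ℝ := fun p =>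
  d 0 0 * (phi 0 p.1 * phi 0 p.2) + d 0 1 * (phi 0 p.1 * phi 1 p.2) +
  d 0 2 * (phi 0 p.1 * phi 2 p.2) + d 0 3 * (phi 0 p.1 * phi 3 p.2) +
  d 0 4 * (phi 0 p.1 * phi 4 p.2) + d 1 0 * (phi 1 p.1 * phi 0 p.2) +
  d 1 1 * (phi 1 p.1 * phi 1 p.2) + d 1 2 * (phi 1 p.1 * phi 2 p.2) +
  d 2 0 * (phi 2 p.1 * phi 0 p.2) + d 2 1 * (phi 2 p.1 * phi 1 p.2) +
  d 3 0 * (phi 3 p.1 * phi 0 p.2) + d 3 1 * (phi 3 p.1 * phi 1 p.2)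

lemma hasDerivAt_poly4 (a0 a1 a2 a3 a4 x : ℝ) :
    HasDerivAt (fun x : ℝ => a0 + a1 * x + a2 * x^2 + a3 * x^3 + a4 * x^4)
      (a1 + 2*a2*x + 3*a3*x^2 + 4*a4*x^3) x := by
  have h0 := hasDerivAt_const x a0
  have h1 := (hasDerivAt_id x).const_mul a1
  have h2 := (hasDerivAt_pow 2 x).const_mul a2
  have h3 := (hasDerivAt_pow 3 x).const_mul a3
  have h4 := (hasDerivAt_pow 4 x).const_mul a4
  have h := (((h0.add h1).add h2).add h3).add h4
  convert h using 1
  · rfl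
  · rfl
  · funext y; simp only [Pi.add_apply, id]
  · norm_num; ring

lemma DXF_hasDeriv (c : ℕ → ℕ → ℝ) (t s : ℝ) :
    HasDerivAt (fun s => DXF c (s, t))
      ((c 1 0 + c 1 1*t + (-1/12)*(c 1 2) + c 1 2*t^2 + (-3/20)*(c 1 3)*t + c 1 3*t^3 +
        (-3/20)*(c 3 0)) + 2*(c 2 0 + c 2 1*t + (-3/14)*(c 4 0))*s + 3*(c 3 0)*s^2 +
        4*(c 4 0)*s^3) s := by
  have h : (fun s => DXF c (s, t)) = fun s =>
      ((c 0 0) + (c 0 1)*t + (-1/12)*(c 0 2) + (c 0 2)*t^2 + (-3/20)*(c 0 3)*t + (c 0 3)*t^3 + (-1/12)*(c 2 0) + (-1/12)*(c 2 1)*t + 3/560*(c 4 0)) + ((c 1 0) + (c 1 1)*t + (-1/12)*(c 1 2) + (c 1 2)*t^2 + (-3/20)*(c 1 3)*t + (c 1 3)*t^3 + (-3/20)*(c 3 0)) * s + ((c 2 0) + (c 2 1)*t + (-3/14)*(c 4 0)) * s^2 + ((c 3 0)) * s^3 + ((c 4 0)) * s^4 := by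
    funext s; simp only [DXF, phi]; ring
  rw [h]
  exact hasDerivAt_poly4 ((c 0 0) + (c 0 1)*t + (-1/12)*(c 0 2) + (c 0 2)*t^2 + (-3/20)*(c 0 3)*t + (c 0 3)*t^3 + (-1/12)*(c 2 0) + (-1/12)*(c 2 1)*t + 3/560*(c 4 0)) ((c 1 0) + (c 1 1)*t + (-1/12)*(c 1 2) + (c 1 2)*t^2 + (-3/20)*(c 1 3)*t + (c 1 3)*t^3 + (-3/20)*(c 3 0)) ((c 2 0) + (c 2 1)*t + (-3/14)*(c 4 0)) (c 3 0) (c 4 0) s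

lemma DYF_hasDeriv (d : ℕ → ℕ → ℝ) (s t : ℝ) :
    HasDerivAt (fun t => DYF d (s, t))
      ((d 0 1 + (-3/20)*(d 0 3) + d 1 1*s + (-1/12)*(d 2 1) + d 2 1*s^2 + (-3/20)*(d 3 1)*s +
        d 3 1*s^3) + 2*(d 0 2 + (-3/14)*(d 0 4) + d 1 2*s)*t + 3*(d 0 3)*t^2 +
        4*(d 0 4)*t^3) t := by
  have h : (fun t => DYF d (s, t)) = fun t =>
      ((d 0 0) + (-1/12)*(d 0 2) + 3/560*(d 0 4) + (d 1 0)*s + (-1/12)*(d 1 2)*s + (-1/12)*(d 2 0) + (d 2 0)*s^2 + (-3/20)*(d 3 0)*s + (d 3 0)*s^3) + ((d 0 1) + (-3/20)*(d 0 3) + (d 1 1)*s + (-1/12)*(d 2 1) + (d 2 1)*s^2 + (-3/20)*(d 3 1)*s + (d 3 1)*s^3) * t + ((d 0 2) + (-3/14)*(d 0 4) + (d 1 2)*s) * t^2 + ((d 0 3)) * t^3 + ((d 0 4)) * t^4 := by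
    funext t; simp only [DYF, phi]; ring
  rw [h]
  exact hasDerivAt_poly4 _ ((d 0 1) + (-3/20)*(d 0 3) + (d 1 1)*s + (-1/12)*(d 2 1) + (d 2 1)*s^2 + (-3/20)*(d 3 1)*s + (d 3 1)*s^3) ((d 0 2) + (-3/14)*(d 0 4) + (d 1 2)*s) (d 0 3) (d 0 4) t
lemma hasDerivAt_poly6 (a0 a1 a2 a3 a4 a5 x : ℝ) :
    HasDerivAt (fun x : ℝ => a0*x + a1/2 * x^2 + a2/3 * x^3 + a3/4 * x^4 + a4/5 * x^5 + a5/6 * x^6)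
      (a0 + a1 * x + a2 * x^2 + a3 * x^3 + a4 * x^4 + a5 * x^5) x := by
  have h0 := (hasDerivAt_id x).const_mul a0
  have h1 := (hasDerivAt_pow 2 x).const_mul (a1/2)
  have h2 := (hasDerivAt_pow 3 x).const_mul (a2/3)
  have h3 := (hasDerivAt_pow 4 x).const_mul (a3/4)
  have h4 := (hasDerivAt_pow 5 x).const_mul (a4/5)
  have h5 := (hasDerivAt_pow 6 x).const_mul (a5/6)
  have h := ((((h0.add h1).add h2).add h3).add h4).add h5
  convert h using 1
  · rfl
  · rfl
  · funext y; simp only [Pi.add_apply, id]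
  · norm_num; ring

lemma integral_poly5 (a0 a1 a2 a3 a4 a5 : ℝ) :
    ∫ x in (-(1:ℝ)/2)..(1/2), (a0 + a1 * x + a2 * x^2 + a3 * x^3 + a4 * x^4 + a5 * x^5)
      = a0 + a2/12 + a4/80 := by
  rw [intervalIntegral.integral_eq_sub_of_hasDerivAt
    (f := fun x : ℝ => a0*x + a1/2 * x^2 + a2/3 * x^3 + a3/4 * x^4 + a4/5 * x^5 + a5/6 * x^6)
    (fun x _ => hasDerivAt_poly6 a0 a1 a2 a3 a4 a5 x)
    (by apply Continuous.intervalIntegrable; fun_prop)]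
  norm_num
  ring

lemma moment_eq (c d : ℕ → ℕ → ℝ) :
    (∫ s in (-(1:ℝ)/2)..(1/2), ∫ t in (-(1:ℝ)/2)..(1/2),
        (DYF d (s, t) * s - DXF c (s, t) * t)) = (d 1 0 - c 0 1) / 12 := by
  have hin : ∀ s : ℝ, (∫ t in (-(1:ℝ)/2)..(1/2), (DYF d (s, t) * s - DXF c (s, t) * t)) =
      ((-1/12)*(c 0 1) + 1/144*(c 2 1)) + ((-1/12)*(c 1 1) + (d 0 0) + (-1/12)*(d 2 0)) * s + ((-1/12)*(c 2 1) + (d 1 0) + (-3/20)*(d 3 0)) * s^2 + ((d 2 0)) * s^3 + ((d 3 0)) * s^4 + (0:ℝ) * s^5 := by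
    intro s
    rw [intervalIntegral.integral_congr (g := fun t =>
      ((d 0 0)*s + (-1/12)*(d 0 2)*s + 3/560*(d 0 4)*s + (d 1 0)*s^2 + (-1/12)*(d 1 2)*s^2 + (-1/12)*(d 2 0)*s + (d 2 0)*s^3 + (-3/20)*(d 3 0)*s^2 + (d 3 0)*s^4) + ((-1)*(c 0 0) + 1/12*(c 0 2) + (-1)*(c 1 0)*s + 1/12*(c 1 2)*s + 1/12*(c 2 0) + (-1)*(c 2 0)*s^2 + 3/20*(c 3 0)*s + (-1)*(c 3 0)*s^3 + (-3/560)*(c 4 0) + 3/14*(c 4 0)*s^2 + (-1)*(c 4 0)*s^4 + (d 0 1)*s + (-3/20)*(d 0 3)*s + (d 1 1)*s^2 + (-1/12)*(d 2 1)*s + (d 2 1)*s^3 + (-3/20)*(d 3 1)*s^2 + (d 3 1)*s^4) * t + ((-1)*(c 0 1) + 3/20*(c 0 3) + (-1)*(c 1 1)*s + 3/20*(c 1 3)*s + 1/12*(c 2 1) + (-1)*(c 2 1)*s^2 + (d 0 2)*s + (-3/14)*(d 0 4)*s + (d 1 2)*s^2) * t^2 + ((-1)*(c 0 2) + (-1)*(c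 1 2)*s + (d 0 3)*s) * t^3 + ((-1)*(c 0 3) + (-1)*(c 1 3)*s + (d 0 4)*s) * t^4 + (0:ℝ) * t^5)
      (fun t _ => by simp only [DXF, DYF, phi]; ring)]
    rw [integral_poly5]; ring
  rw [intervalIntegral.integral_congr (g := fun s =>
      ((-1/12)*(c 0 1) + 1/144*(c 2 1)) + ((-1/12)*(c 1 1) + (d 0 0) + (-1/12)*(d 2 0)) * s + ((-1/12)*(c 2 1) + (d 1 0) + (-3/20)*(d 3 0)) * s^2 + ((d 2 0)) * s^3 + ((d 3 0)) * s^4 + (0:ℝ) * s^5)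
      (fun s _ => hin s)]
  rw [integral_poly5]; ring

def SXset : Set (ℝ × ℝ → ℝ) := {f : ℝ × ℝ → ℝ | ∃ i j : ℕ, i + j ≤ 4 ∧ j ≤ 3 ∧
          ¬(i = 3 ∧ j = 1) ∧ ¬(i = 2 ∧ j = 2) ∧ f = fun p => phi i p.1 * phi j p.2}

def SYset : Set (ℝ × ℝ → ℝ) := {f : ℝ × ℝ → ℝ | ∃ i j : ℕ, i + j ≤ 4 ∧ i ≤ 3 ∧
          ¬(i = 2 ∧ j = 2) ∧ ¬(i = 1 ∧ j = 3) ∧ f = fun p => phi i p.1 * phi j p.2}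

lemma DXF_mem (c : ℕ → ℕ → ℝ) : DXF c ∈ Submodule.span ℝ SXset := by
  have h : DXF c =
      c 0 0 • (fun p : ℝ × ℝ => phi 0 p.1 * phi 0 p.2) + c 0 1 • (fun p : ℝ × ℝ => phi 0 p.1 * phi 1 p.2) +
      c 0 2 • (fun p : ℝ × ℝ => phi 0 p.1 * phi 2 p.2) + c 0 3 • (fun p : ℝ × ℝ => phi 0 p.1 * phi 3 p.2) +
      c 1 0 • (fun p : ℝ × ℝ => phi 1 p.1 * phi 0 p.2) + c 1 1 • (fun p : ℝ × ℝ => phi 1 p.1 * phi 1 p.2) +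
      c 1 2 • (fun p : ℝ × ℝ => phi 1 p.1 * phi 2 p.2) + c 1 3 • (fun p : ℝ × ℝ => phi 1 p.1 * phi 3 p.2) +
      c 2 0 • (fun p : ℝ × ℝ => phi 2 p.1 * phi 0 p.2) + c 2 1 • (fun p : ℝ × ℝ => phi 2 p.1 * phi 1 p.2) +
      c 3 0 • (fun p : ℝ × ℝ => phi 3 p.1 * phi 0 p.2) + c 4 0 • (fun p : ℝ × ℝ => phi 4 p.1 * phi 0 p.2) := by
    funext p; simp [DXF]
  rw [h]
  have hb : ∀ i j : ℕ, i + j ≤ 4 → j ≤ 3 → ¬(i = 3 ∧ j = 1) → ¬(i = 2 ∧ j = 2) →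
      (fun p : ℝ × ℝ => phi i p.1 * phi j p.2) ∈ Submodule.span ℝ SXset :=
    fun i j h1 h2 h3 h4 => Submodule.subset_span ⟨i, j, h1, h2, h3, h4, rfl⟩
  refine Submodule.add_mem _ (Submodule.add_mem _ (Submodule.add_mem _ (Submodule.add_mem _
    (Submodule.add_mem _ (Submodule.add_mem _ (Submodule.add_mem _ (Submodule.add_mem _
    (Submodule.add_mem _ (Submodule.add_mem _ (Submodule.add_mem _
    (Submodule.smul_mem _ _ (hb 0 0 (by norm_num) (by norm_num) (by norm_num) (by norm_num)))
    (Submodule.smul_mem _ _ (hb 0 1 (by norm_num) (by norm_num) (by norm_num) (by norm_num))))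
    (Submodule.smul_mem _ _ (hb 0 2 (by norm_num) (by norm_num) (by norm_num) (by norm_num))))
    (Submodule.smul_mem _ _ (hb 0 3 (by norm_num) (by norm_num) (by norm_num) (by norm_num))))
    (Submodule.smul_mem _ _ (hb 1 0 (by norm_num) (by norm_num) (by norm_num) (by norm_num))))
    (Submodule.smul_mem _ _ (hb 1 1 (by norm_num) (by norm_num) (by norm_num) (by norm_num))))
    (Submodule.smul_mem _ _ (hb 1 2 (by norm_num) (by norm_num) (by norm_num) (by norm_num))))
    (Submodule.smul_mem _ _ (hb 1 3 (by norm_num) (by norm_num) (by norm_num) (by norm_num))))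
    (Submodule.smul_mem _ _ (hb 2 0 (by norm_num) (by norm_num) (by norm_num) (by norm_num))))
    (Submodule.smul_mem _ _ (hb 2 1 (by norm_num) (by norm_num) (by norm_num) (by norm_num))))
    (Submodule.smul_mem _ _ (hb 3 0 (by norm_num) (by norm_num) (by norm_num) (by norm_num))))
    (Submodule.smul_mem _ _ (hb 4 0 (by norm_num) (by norm_num) (by norm_num) (by norm_num)))

lemma DYF_mem (d : ℕ → ℕ → ℝ) : DYF d ∈ Submodule.span ℝ SYset := by
  have h : DYF d =
      d 0 0 • (fun p : ℝ × ℝ => phi 0 p.1 * phi 0 p.2) + d 0 1 • (fun p : ℝ × ℝ => phi 0 p.1 * phi 1 p.2) +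
      d 0 2 • (fun p : ℝ × ℝ => phi 0 p.1 * phi 2 p.2) + d 0 3 • (fun p : ℝ × ℝ => phi 0 p.1 * phi 3 p.2) +
      d 0 4 • (fun p : ℝ × ℝ => phi 0 p.1 * phi 4 p.2) + d 1 0 • (fun p : ℝ × ℝ => phi 1 p.1 * phi 0 p.2) +
      d 1 1 • (fun p : ℝ × ℝ => phi 1 p.1 * phi 1 p.2) + d 1 2 • (fun p : ℝ × ℝ => phi 1 p.1 * phi 2 p.2) +
      d 2 0 • (fun p : ℝ × ℝ => phi 2 p.1 * phi 0 p.2) + d 2 1 • (fun p : ℝ × ℝ => phi 2 p.1 * phi 1 p.2) +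
      d 3 0 • (fun p : ℝ × ℝ => phi 3 p.1 * phi 0 p.2) + d 3 1 • (fun p : ℝ × ℝ => phi 3 p.1 * phi 1 p.2) := by
    funext p; simp [DYF]
  rw [h]
  have hb : ∀ i j : ℕ, i + j ≤ 4 → i ≤ 3 → ¬(i = 2 ∧ j = 2) → ¬(i = 1 ∧ j = 3) →
      (fun p : ℝ × ℝ => phi i p.1 * phi j p.2) ∈ Submodule.span ℝ SYset :=
    fun i j h1 h2 h3 h4 => Submodule.subset_span ⟨i, j, h1, h2, h3, h4, rfl⟩
  refine Submodule.add_mem _ (Submodule.add_mem _ (Submodule.add_mem _ (Submodule.add_mem _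
    (Submodule.add_mem _ (Submodule.add_mem _ (Submodule.add_mem _ (Submodule.add_mem _
    (Submodule.add_mem _ (Submodule.add_mem _ (Submodule.add_mem _
    (Submodule.smul_mem _ _ (hb 0 0 (by norm_num) (by norm_num) (by norm_num) (by norm_num)))
    (Submodule.smul_mem _ _ (hb 0 1 (by norm_num) (by norm_num) (by norm_num) (by norm_num))))
    (Submodule.smul_mem _ _ (hb 0 2 (by norm_num) (by norm_num) (by norm_num) (by norm_num))))
    (Submodule.smul_mem _ _ (hb 0 3 (by norm_num) (by norm_num) (by norm_num) (by norm_num))))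
    (Submodule.smul_mem _ _ (hb 0 4 (by norm_num) (by norm_num) (by norm_num) (by norm_num))))
    (Submodule.smul_mem _ _ (hb 1 0 (by norm_num) (by norm_num) (by norm_num) (by norm_num))))
    (Submodule.smul_mem _ _ (hb 1 1 (by norm_num) (by norm_num) (by norm_num) (by norm_num))))
    (Submodule.smul_mem _ _ (hb 1 2 (by norm_num) (by norm_num) (by norm_num) (by norm_num))))
    (Submodule.smul_mem _ _ (hb 2 0 (by norm_num) (by norm_num) (by norm_num) (by norm_num))))
    (Submodule.smul_mem _ _ (hb 2 1 (by norm_num) (by norm_num) (by norm_num) (by norm_num))))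
    (Submodule.smul_mem _ _ (hb 3 0 (by norm_num) (by norm_num) (by norm_num) (by norm_num))))
    (Submodule.smul_mem _ _ (hb 3 1 (by norm_num) (by norm_num) (by norm_num) (by norm_num)))

lemma DXF_rep (y : ℝ × ℝ → ℝ) (hy : y ∈ Submodule.span ℝ SXset) : ∃ c, y = DXF c := by
  induction hy using Submodule.span_induction with
  | mem x hx =>
    obtain ⟨i, j, h1, h2, h3, h4, rfl⟩ := hx
    refine ⟨fun a b => if a = i ∧ b = j then 1 else 0, ?_⟩
    have hi : i ≤ 4 := by omega
    funext p
    interval_cases i <;> interval_cases j <;> simp_all [DXF]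
  | zero => exact ⟨fun _ _ => 0, by funext p; simp [DXF]⟩
  | add x y hx hy ihx ihy =>
    obtain ⟨c, rfl⟩ := ihx; obtain ⟨d, rfl⟩ := ihy
    exact ⟨fun i j => c i j + d i j, by funext p; simp [DXF]; ring⟩
  | smul a x hx ih =>
    obtain ⟨c, rfl⟩ := ih
    exact ⟨fun i j => a * c i j, by funext p; simp [DXF]; ring⟩

lemma DYF_rep (y : ℝ × ℝ → ℝ) (hy : y ∈ Submodule.span ℝ SYset) : ∃ d, y = DYF d := by
  induction hy using Submodule.span_induction with
  | mem x hx =>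
    obtain ⟨i, j, h1, h2, h3, h4, rfl⟩ := hx
    refine ⟨fun a b => if a = i ∧ b = j then 1 else 0, ?_⟩
    have hj : j ≤ 4 := by omega
    funext p
    interval_cases i <;> interval_cases j <;> simp_all [DYF]
  | zero => exact ⟨fun _ _ => 0, by funext p; simp [DYF]⟩
  | add x y hx hy ihx ihy =>
    obtain ⟨c, rfl⟩ := ihx; obtain ⟨d, rfl⟩ := ihy
    exact ⟨fun i j => c i j + d i j, by funext p; simp [DYF]; ring⟩
  | smul a x hx ih =>
    obtain ⟨c, rfl⟩ := ih
    exact ⟨fun i j => a * c i j, by funext p; simp [DYF]; ring⟩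

noncomputable def ccX (Δx Δy : ℝ) (ap am bp bm : ℕ → ℝ) (ω₁ : ℝ) : ℕ → ℕ → ℝ
  | 0, 0 => (6*Δy*(ap 0 + am 0) + Δx*(bp 1 - bm 1))/(12*Δy)
  | 0, 1 => ((ap 1 + am 1)*(Δx+Δy) - Δx*(2*ω₁ - (bp 1 + bm 1 - ap 1 - am 1)))/(2*(Δx+Δy))
  | 0, 2 => (ap 2 + am 2)/(2)
  | 0, 3 => (ap 3 + am 3)/(2)
  | 1, 0 => (30*Δy*(ap 0 - am 0) + Δx*(bp 2 - bm 2))/(30*Δy)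
  | 1, 1 => ap 1 - am 1
  | 1, 2 => ap 2 - am 2
  | 1, 3 => ap 3 - am 3
  | 2, 0 => (3*Δx*(bp 3 - bm 3) - 70*Δx*(bp 1 - bm 1))/(140*Δy)
  | 2, 1 => (3*Δx*(2*ω₁ - (bp 1 + bm 1 - ap 1 - am 1)))/(Δx+Δy)
  | 3, 0 => (-(Δx*(bp 2 - bm 2)))/(3*Δy)
  | 4, 0 => (-(Δx*(bp 3 - bm 3)))/(4*Δy)
  | _, _ => 0

noncomputable def ccY (Δx Δy : ℝ) (ap am bp bm : ℕ → ℝ) (ω₁ : ℝ) : ℕ → ℕ → ℝ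
  | 0, 0 => (6*Δx*(bp 0 + bm 0) + Δy*(ap 1 - am 1))/(12*Δx)
  | 0, 1 => (30*Δx*(bp 0 - bm 0) + Δy*(ap 2 - am 2))/(30*Δx)
  | 0, 2 => (3*Δy*(ap 3 - am 3) - 70*Δy*(ap 1 - am 1))/(140*Δx)
  | 0, 3 => (-(Δy*(ap 2 - am 2)))/(3*Δx)
  | 0, 4 => (-(Δy*(ap 3 - am 3)))/(4*Δx)
  | 1, 0 => ((bp 1 + bm 1)*(Δx+Δy) + Δy*(2*ω₁ - (bp 1 + bm 1 - ap 1 - am 1)))/(2*(Δx+Δy))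
  | 1, 1 => bp 1 - bm 1
  | 1, 2 => (-(3*Δy*(2*ω₁ - (bp 1 + bm 1 - ap 1 - am 1))))/(Δx+Δy)
  | 2, 0 => (bp 2 + bm 2)/(2)
  | 2, 1 => bp 2 - bm 2
  | 3, 0 => (bp 3 + bm 3)/(2)
  | 3, 1 => bp 3 - bm 3
  | _, _ => 0

lemma DXF_deriv (c : ℕ → ℕ → ℝ) (t s : ℝ) :
    deriv (fun s => DXF c (s, t)) s =
      ((c 1 0 + c 1 1*t + (-1/12)*(c 1 2) + c 1 2*t^2 + (-3/20)*(c 1 3)*t + c 1 3*t^3 +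
        (-3/20)*(c 3 0)) + 2*(c 2 0 + c 2 1*t + (-3/14)*(c 4 0))*s + 3*(c 3 0)*s^2 +
        4*(c 4 0)*s^3) := (DXF_hasDeriv c t s).deriv

lemma DYF_deriv (d : ℕ → ℕ → ℝ) (s t : ℝ) :
    deriv (fun t => DYF d (s, t)) t =
      ((d 0 1 + (-3/20)*(d 0 3) + d 1 1*s + (-1/12)*(d 2 1) + d 2 1*s^2 + (-3/20)*(d 3 1)*s +
        d 3 1*s^3) + 2*(d 0 2 + (-3/14)*(d 0 4) + d 1 2*s)*t + 3*(d 0 3)*t^2 +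
        4*(d 0 4)*t^3) := (DYF_hasDeriv d s t).deriv

set_option maxHeartbeats 2000000

lemma clear_div {Δx Δy P Q : ℝ} (hx : Δx ≠ 0) (hy : Δy ≠ 0)
    (h : 1/Δx * P + 1/Δy * Q = 0) : Δy * P + Δx * Q = 0 := by
  field_simp at h
  linarith [h]

lemma uniq_coeffs (Δx Δy : ℝ) (hΔx : 0 < Δx) (hΔy : 0 < Δy)
    (ap am bp bm : ℕ → ℝ) (ω₁ : ℝ) (e f : ℕ → ℕ → ℝ)
    (hxp : ∀ η ∈ Set.Icc (-(1:ℝ)/2) (1/2), DXF e (1/2, η) = ∑ j ∈ Finset.range 4, ap j * phi j η)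
    (hxm : ∀ η ∈ Set.Icc (-(1:ℝ)/2) (1/2), DXF e (-(1/2), η) = ∑ j ∈ Finset.range 4, am j * phi j η)
    (hyq : ∀ ξ ∈ Set.Icc (-(1:ℝ)/2) (1/2), DYF f (ξ, 1/2) = ∑ j ∈ Finset.range 4, bp j * phi j ξ)
    (hym : ∀ ξ ∈ Set.Icc (-(1:ℝ)/2) (1/2), DYF f (ξ, -(1/2)) = ∑ j ∈ Finset.range 4, bm j * phi j ξ)
    (hdiv : ∀ p ∈ (Set.Icc (-(1:ℝ)/2) (1/2)) ×ˢ (Set.Icc (-(1:ℝ)/2) (1/2)),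
        (1 / Δx) * deriv (fun ξ => DXF e (ξ, p.2)) p.1 + (1 / Δy) * deriv (fun η => DYF f (p.1, η)) p.2 = 0)
    (hmom : (12 * ∫ ξ in (-(1:ℝ)/2)..(1/2), ∫ η in (-(1:ℝ)/2)..(1/2),
        (DYF f (ξ, η) * ξ - DXF e (ξ, η) * η)) = ω₁) :
    DXF e = DXF (ccX Δx Δy ap am bp bm ω₁) ∧ DYF f = DYF (ccY Δx Δy ap am bp bm ω₁) := by
  have hx0 : Δx ≠ 0 := hΔx.ne'
  have hy0 : Δy ≠ 0 := hΔy.ne'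
  have hxp1 := hxp ((1:ℝ)/2) (by norm_num)
  have hxp2 := hxp ((1:ℝ)/4) (by norm_num)
  have hxp3 := hxp (-((1:ℝ)/4)) (by norm_num)
  have hxp4 := hxp (-((1:ℝ)/2)) (by norm_num)
  have hxm1 := hxm ((1:ℝ)/2) (by norm_num)
  have hxm2 := hxm ((1:ℝ)/4) (by norm_num)
  have hxm3 := hxm (-((1:ℝ)/4)) (by norm_num)
  have hxm4 := hxm (-((1:ℝ)/2)) (by norm_num)
  have hyq1 := hyq ((1:ℝ)/2) (by norm_num)
  have hyq2 := hyq ((1:ℝ)/4) (by norm_num)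
  have hyq3 := hyq (-((1:ℝ)/4)) (by norm_num)
  have hyq4 := hyq (-((1:ℝ)/2)) (by norm_num)
  have hym1 := hym ((1:ℝ)/2) (by norm_num)
  have hym2 := hym ((1:ℝ)/4) (by norm_num)
  have hym3 := hym (-((1:ℝ)/4)) (by norm_num)
  have hym4 := hym (-((1:ℝ)/2)) (by norm_num)
  simp only [DXF, DYF, phi, Finset.sum_range_succ, Finset.sum_range_zero] at hxp1 hxp2 hxp3 hxp4 hxm1 hxm2 hxm3 hxm4 hyq1 hyq2 hyq3 hyq4 hym1 hym2 hym3 hym4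
  norm_num at hxp1 hxp2 hxp3 hxp4 hxm1 hxm2 hxm3 hxm4 hyq1 hyq2 hyq3 hyq4 hym1 hym2 hym3 hym4
  have hE02 : e 0 2 = (ap 2 + am 2)/2 := by linear_combination (4/3)*hxp1 + (-4/3)*hxp2 + (-4/3)*hxp3 + (4/3)*hxp4 + (4/3)*hxm1 + (-4/3)*hxm2 + (-4/3)*hxm3 + (4/3)*hxm4
  have hE03 : e 0 3 = (ap 3 + am 3)/2 := by linear_combination (8/3)*hxp1 + (-16/3)*hxp2 + (16/3)*hxp3 + (-8/3)*hxp4 + (8/3)*hxm1 + (-16/3)*hxm2 + (16/3)*hxm3 + (-8/3)*hxm4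
  have hE11 : e 1 1 = ap 1 - am 1 := by linear_combination (7/15)*hxp1 + (16/15)*hxp2 + (-16/15)*hxp3 + (-7/15)*hxp4 + (-7/15)*hxm1 + (-16/15)*hxm2 + (16/15)*hxm3 + (7/15)*hxm4
  have hE12 : e 1 2 = ap 2 - am 2 := by linear_combination (8/3)*hxp1 + (-8/3)*hxp2 + (-8/3)*hxp3 + (8/3)*hxp4 + (-8/3)*hxm1 + (8/3)*hxm2 + (8/3)*hxm3 + (-8/3)*hxm4
  have hE13 : e 1 3 = ap 3 - am 3 := by linear_combination (16/3)*hxp1 + (-32/3)*hxp2 + (32/3)*hxp3 + (-16/3)*hxp4 + (-16/3)*hxm1 + (32/3)*hxm2 + (-32/3)*hxm3 + (16/3)*hxm4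
  have hE01s : e 0 1 + e 2 1/6 = (ap 1 + am 1)/2 := by linear_combination (7/30)*hxp1 + (8/15)*hxp2 + (-8/15)*hxp3 + (-7/30)*hxp4 + (7/30)*hxm1 + (8/15)*hxm2 + (-8/15)*hxm3 + (-7/30)*hxm4
  have hE00s : e 0 0 + e 2 0/6 + e 4 0/70 = (ap 0 + am 0)/2 := by linear_combination (1/36)*hxp1 + (2/9)*hxp2 + (2/9)*hxp3 + (1/36)*hxp4 + (1/36)*hxm1 + (2/9)*hxm2 + (2/9)*hxm3 + (1/36)*hxm4
  have hE10d : e 1 0 + e 3 0/10 = ap 0 - am 0 := by linear_combination (1/18)*hxp1 + (4/9)*hxp2 + (4/9)*hxp3 + (1/18)*hxp4 + (-1/18)*hxm1 + (-4/9)*hxm2 + (-4/9)*hxm3 + (-1/18)*hxm4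
  have hF20 : f 2 0 = (bp 2 + bm 2)/2 := by linear_combination (4/3)*hyq1 + (-4/3)*hyq2 + (-4/3)*hyq3 + (4/3)*hyq4 + (4/3)*hym1 + (-4/3)*hym2 + (-4/3)*hym3 + (4/3)*hym4
  have hF30 : f 3 0 = (bp 3 + bm 3)/2 := by linear_combination (8/3)*hyq1 + (-16/3)*hyq2 + (16/3)*hyq3 + (-8/3)*hyq4 + (8/3)*hym1 + (-16/3)*hym2 + (16/3)*hym3 + (-8/3)*hym4
  have hF11 : f 1 1 = bp 1 - bm 1 := by linear_combination (7/15)*hyq1 + (16/15)*hyq2 + (-16/15)*hyq3 + (-7/15)*hyq4 + (-7/15)*hym1 + (-16/15)*hym2 + (16/15)*hym3 + (7/15)*hym4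
  have hF21 : f 2 1 = bp 2 - bm 2 := by linear_combination (8/3)*hyq1 + (-8/3)*hyq2 + (-8/3)*hyq3 + (8/3)*hyq4 + (-8/3)*hym1 + (8/3)*hym2 + (8/3)*hym3 + (-8/3)*hym4
  have hF31 : f 3 1 = bp 3 - bm 3 := by linear_combination (16/3)*hyq1 + (-32/3)*hyq2 + (32/3)*hyq3 + (-16/3)*hyq4 + (-16/3)*hym1 + (32/3)*hym2 + (-32/3)*hym3 + (16/3)*hym4
  have hF10s : f 1 0 + f 1 2/6 = (bp 1 + bm 1)/2 := by linear_combination (7/30)*hyq1 + (8/15)*hyq2 + (-8/15)*hyq3 + (-7/30)*hyq4 + (7/30)*hym1 + (8/15)*hym2 + (-8/15)*hym3 + (-7/30)*hym4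
  have hF00s : f 0 0 + f 0 2/6 + f 0 4/70 = (bp 0 + bm 0)/2 := by linear_combination (1/36)*hyq1 + (2/9)*hyq2 + (2/9)*hyq3 + (1/36)*hyq4 + (1/36)*hym1 + (2/9)*hym2 + (2/9)*hym3 + (1/36)*hym4
  have hF01d : f 0 1 + f 0 3/10 = bp 0 - bm 0 := by linear_combination (1/18)*hyq1 + (4/9)*hyq2 + (4/9)*hyq3 + (1/18)*hyq4 + (-1/18)*hym1 + (-4/9)*hym2 + (-4/9)*hym3 + (-1/18)*hym4
  rw [moment_eq] at hmom
  have hM : f 1 0 - e 0 1 = ω₁ := by linear_combination hmom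
  have hdv1 := hdiv ((0:ℝ), (1:ℝ)/2) (Set.mk_mem_prod (by norm_num) (by norm_num))
  have hdv2 := hdiv ((0:ℝ), (1:ℝ)/4) (Set.mk_mem_prod (by norm_num) (by norm_num))
  have hdv3 := hdiv ((0:ℝ), -((1:ℝ)/4)) (Set.mk_mem_prod (by norm_num) (by norm_num))
  have hdv4 := hdiv ((0:ℝ), -((1:ℝ)/2)) (Set.mk_mem_prod (by norm_num) (by norm_num))
  have hdv5 := hdiv ((1:ℝ)/2, (0:ℝ)) (Set.mk_mem_prod (by norm_num) (by norm_num))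
  have hdv6 := hdiv ((1:ℝ)/4, (0:ℝ)) (Set.mk_mem_prod (by norm_num) (by norm_num))
  have hdv7 := hdiv (-((1:ℝ)/4), (0:ℝ)) (Set.mk_mem_prod (by norm_num) (by norm_num))
  have hdv8 := hdiv (-((1:ℝ)/2), (0:ℝ)) (Set.mk_mem_prod (by norm_num) (by norm_num))
  have hdv9 := hdiv ((1:ℝ)/2, (1:ℝ)/2) (Set.mk_mem_prod (by norm_num) (by norm_num))
  rw [DXF_deriv, DYF_deriv] at hdv1 hdv2 hdv3 hdv4 hdv5 hdv6 hdv7 hdv8 hdv9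
  have hdw1 := clear_div hx0 hy0 hdv1
  have hdw2 := clear_div hx0 hy0 hdv2
  have hdw3 := clear_div hx0 hy0 hdv3
  have hdw4 := clear_div hx0 hy0 hdv4
  have hdw5 := clear_div hx0 hy0 hdv5
  have hdw6 := clear_div hx0 hy0 hdv6
  have hdw7 := clear_div hx0 hy0 hdv7
  have hdw8 := clear_div hx0 hy0 hdv8
  have hdw9 := clear_div hx0 hy0 hdv9
  norm_num at hdw1 hdw2 hdw3 hdw4 hdw5 hdw6 hdw7 hdw8 hdw9
  have hd2 : Δy*(e 1 1) + 2*Δx*(f 0 2) + (6/35)*Δx*(f 0 4) = 0 := by linear_combination (7/15)*hdw1 + (16/15)*hdw2 + (-16/15)*hdw3 + (-7/15)*hdw4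
  have hd3 : 3*Δx*(f 0 3) + Δy*(e 1 2) = 0 := by linear_combination (8/3)*hdw1 + (-8/3)*hdw2 + (-8/3)*hdw3 + (8/3)*hdw4
  have hd4 : 4*Δx*(f 0 4) + Δy*(e 1 3) = 0 := by linear_combination (16/3)*hdw1 + (-32/3)*hdw2 + (32/3)*hdw3 + (-16/3)*hdw4
  have hd5 : 2*Δy*(e 2 0) + (6/35)*Δy*(e 4 0) + Δx*(f 1 1) = 0 := by linear_combination (-7/15)*hdw1 + (28/15)*hdw2 + (28/15)*hdw3 + (-7/15)*hdw4 + (14/15)*hdw5 + (-4/5)*hdw6 + (-44/15)*hdw7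
  have hd6 : Δy*(e 2 1) + Δx*(f 1 2) = 0 := by linear_combination (-7/3)*hdw1 + (4/3)*hdw2 + (4/3)*hdw3 + (-1/3)*hdw4 + (-2)*hdw5 + 2*hdw9
  have hd7 : 3*Δy*(e 3 0) + Δx*(f 2 1) = 0 := by linear_combination (8/3)*hdw1 + (-32/3)*hdw2 + (-32/3)*hdw3 + (8/3)*hdw4 + 8*hdw6 + 8*hdw7
  have hd8 : 4*Δy*(e 4 0) + Δx*(f 3 1) = 0 := by linear_combination (-16/3)*hdw1 + (64/3)*hdw2 + (64/3)*hdw3 + (-16/3)*hdw4 + (32/3)*hdw5 + (-32)*hdw6 + (-32/3)*hdw7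
  have q00 : e 0 0 = (6*Δy*(ap 0 + am 0) + Δx*(bp 1 - bm 1))/(12*Δy) := by
    rw [eq_div_iff (by positivity : (12*Δy : ℝ) ≠ 0)]
    linear_combination (-1)*hd5 + 12*Δy*hE00s + Δx*hF11
  have q01 : e 0 1 = ((ap 1 + am 1)*(Δx+Δy) - Δx*(2*ω₁ - (bp 1 + bm 1 - ap 1 - am 1)))/(2*(Δx+Δy)) := by
    rw [eq_div_iff (by positivity : (2*(Δx+Δy) : ℝ) ≠ 0)]
    linear_combination (-1/3)*hd6 + 2*Δy*hE01s + 2*Δx*hF10s + (-2)*Δx*hM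
  have q02 : e 0 2 = (ap 2 + am 2)/(2) := by
    rw [eq_div_iff (by positivity : (2 : ℝ) ≠ 0)]
    linear_combination 2*hE02
  have q03 : e 0 3 = (ap 3 + am 3)/(2) := by
    rw [eq_div_iff (by positivity : (2 : ℝ) ≠ 0)]
    linear_combination 2*hE03
  have q10 : e 1 0 = (30*Δy*(ap 0 - am 0) + Δx*(bp 2 - bm 2))/(30*Δy) := by
    rw [eq_div_iff (by positivity : (30*Δy : ℝ) ≠ 0)]
    linear_combination (-1)*hd7 + 30*Δy*hE10d + Δx*hF21
  have q20 : e 2 0 = (3*Δx*(bp 3 - bm 3) - 70*Δx*(bp 1 - bm 1))/(140*Δy) := by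
    rw [eq_div_iff (by positivity : (140*Δy : ℝ) ≠ 0)]
    linear_combination 70*hd5 + (-3)*hd8 + (-70)*Δx*hF11 + 3*Δx*hF31
  have q21 : e 2 1 = (3*Δx*(2*ω₁ - (bp 1 + bm 1 - ap 1 - am 1)))/(Δx+Δy) := by
    rw [eq_div_iff (by positivity : (Δx+Δy : ℝ) ≠ 0)]
    linear_combination hd6 + 6*Δx*hE01s + (-6)*Δx*hF10s + 6*Δx*hM
  have q30 : e 3 0 = (-(Δx*(bp 2 - bm 2)))/(3*Δy) := by
    rw [eq_div_iff (by positivity : (3*Δy : ℝ) ≠ 0)]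
    linear_combination hd7 + (-1)*Δx*hF21
  have q40 : e 4 0 = (-(Δx*(bp 3 - bm 3)))/(4*Δy) := by
    rw [eq_div_iff (by positivity : (4*Δy : ℝ) ≠ 0)]
    linear_combination hd8 + (-1)*Δx*hF31
  have r00 : f 0 0 = (6*Δx*(bp 0 + bm 0) + Δy*(ap 1 - am 1))/(12*Δx) := by
    rw [eq_div_iff (by positivity : (12*Δx : ℝ) ≠ 0)]
    linear_combination (-1)*hd2 + Δy*hE11 + 12*Δx*hF00s
  have r01 : f 0 1 = (30*Δx*(bp 0 - bm 0) + Δy*(ap 2 - am 2))/(30*Δx) := by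
    rw [eq_div_iff (by positivity : (30*Δx : ℝ) ≠ 0)]
    linear_combination (-1)*hd3 + Δy*hE12 + 30*Δx*hF01d
  have r02 : f 0 2 = (3*Δy*(ap 3 - am 3) - 70*Δy*(ap 1 - am 1))/(140*Δx) := by
    rw [eq_div_iff (by positivity : (140*Δx : ℝ) ≠ 0)]
    linear_combination 70*hd2 + (-3)*hd4 + (-70)*Δy*hE11 + 3*Δy*hE13
  have r03 : f 0 3 = (-(Δy*(ap 2 - am 2)))/(3*Δx) := by
    rw [eq_div_iff (by positivity : (3*Δx : ℝ) ≠ 0)]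
    linear_combination hd3 + (-1)*Δy*hE12
  have r04 : f 0 4 = (-(Δy*(ap 3 - am 3)))/(4*Δx) := by
    rw [eq_div_iff (by positivity : (4*Δx : ℝ) ≠ 0)]
    linear_combination hd4 + (-1)*Δy*hE13
  have r10 : f 1 0 = ((bp 1 + bm 1)*(Δx+Δy) + Δy*(2*ω₁ - (bp 1 + bm 1 - ap 1 - am 1)))/(2*(Δx+Δy)) := by
    rw [eq_div_iff (by positivity : (2*(Δx+Δy) : ℝ) ≠ 0)]
    linear_combination (-1/3)*hd6 + 2*Δy*hE01s + 2*Δx*hF10s + 2*Δy*hM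
  have r12 : f 1 2 = (-(3*Δy*(2*ω₁ - (bp 1 + bm 1 - ap 1 - am 1))))/(Δx+Δy) := by
    rw [eq_div_iff (by positivity : (Δx+Δy : ℝ) ≠ 0)]
    linear_combination hd6 + (-6)*Δy*hE01s + 6*Δy*hF10s + (-6)*Δy*hM
  have r20 : f 2 0 = (bp 2 + bm 2)/(2) := by
    rw [eq_div_iff (by positivity : (2 : ℝ) ≠ 0)]
    linear_combination 2*hF20
  have r30 : f 3 0 = (bp 3 + bm 3)/(2) := by
    rw [eq_div_iff (by positivity : (2 : ℝ) ≠ 0)]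
    linear_combination 2*hF30
  have q11 : e 1 1 = ap 1 - am 1 := hE11
  have q12 : e 1 2 = ap 2 - am 2 := hE12
  have q13 : e 1 3 = ap 3 - am 3 := hE13
  have r11 : f 1 1 = bp 1 - bm 1 := hF11
  have r21 : f 2 1 = bp 2 - bm 2 := hF21
  have r31 : f 3 1 = bp 3 - bm 3 := hF31
  constructor
  · funext p
    simp only [DXF]
    rw [q00, q01, q02, q03, q10, q11, q12, q13, q20, q21, q30, q40]
    simp only [ccX]
  · funext p
    simp only [DYF]
    rw [r00, r01, r02, r03, r04, r10, r11, r12, r20, r21, r30, r31]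
    simp only [ccY]



set_option maxHeartbeats 2000000 in
/-- Fourth-order divergence-free reconstruction: given degree-3 face
polynomials satisfying the compatibility condition and a cell moment `ω₁`, there is a
unique BDFM-type vector field `(Dx, Dy)` matching the faces, divergence-free in the cell,
and with prescribed first curl moment `ω₁`. -/
theorem fourth_order_divfree_reconstruction
    (Δx Δy : ℝ) (hΔx : 0 < Δx) (hΔy : 0 < Δy)
    (ap am bp bm : ℕ → ℝ)
    (hcompat : (ap 0 - am 0) * Δy + (bp 0 - bm 0) * Δx = 0)
    (ω₁ : ℝ) :
    ∃! D : (ℝ × ℝ → ℝ) × (ℝ × ℝ → ℝ),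
      D.1 ∈ Submodule.span ℝ {f : ℝ × ℝ → ℝ | ∃ i j : ℕ, i + j ≤ 4 ∧ j ≤ 3 ∧
          ¬(i = 3 ∧ j = 1) ∧ ¬(i = 2 ∧ j = 2) ∧ f = fun p => phi i p.1 * phi j p.2} ∧
      D.2 ∈ Submodule.span ℝ {f : ℝ × ℝ → ℝ | ∃ i j : ℕ, i + j ≤ 4 ∧ i ≤ 3 ∧
          ¬(i = 2 ∧ j = 2) ∧ ¬(i = 1 ∧ j = 3) ∧ f = fun p => phi i p.1 * phi j p.2} ∧
      (∀ η ∈ Set.Icc (-(1:ℝ)/2) (1/2),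
        D.1 (1/2, η) = ∑ j ∈ Finset.range 4, ap j * phi j η) ∧
      (∀ η ∈ Set.Icc (-(1:ℝ)/2) (1/2),
        D.1 (-(1/2), η) = ∑ j ∈ Finset.range 4, am j * phi j η) ∧
      (∀ ξ ∈ Set.Icc (-(1:ℝ)/2) (1/2),
        D.2 (ξ, 1/2) = ∑ j ∈ Finset.range 4, bp j * phi j ξ) ∧
      (∀ ξ ∈ Set.Icc (-(1:ℝ)/2) (1/2),
        D.2 (ξ, -(1/2)) = ∑ j ∈ Finset.range 4, bm j * phi j ξ) ∧
      (∀ p ∈ (Set.Icc (-(1:ℝ)/2) (1/2)) ×ˢ (Set.Icc (-(1:ℝ)/2) (1/2)),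
        (1 / Δx) * deriv (fun ξ => D.1 (ξ, p.2)) p.1
          + (1 / Δy) * deriv (fun η => D.2 (p.1, η)) p.2 = 0) ∧
      (12 * ∫ ξ in (-(1:ℝ)/2)..(1/2), ∫ η in (-(1:ℝ)/2)..(1/2),
        (D.2 (ξ, η) * ξ - D.1 (ξ, η) * η)) = ω₁ := by
  have hx0 : Δx ≠ 0 := hΔx.ne'
  have hy0 : Δy ≠ 0 := hΔy.ne'
  have hxy0 : Δx + Δy ≠ 0 := by positivity
  refine ⟨(DXF (ccX Δx Δy ap am bp bm ω₁), DYF (ccY Δx Δy ap am bp bm ω₁)),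
    ⟨DXF_mem _, DYF_mem _, ?_, ?_, ?_, ?_, ?_, ?_⟩, ?_⟩
  · intro η _
    simp only [DXF, ccX, phi, Finset.sum_range_succ, Finset.sum_range_zero]
    field_simp
    ring
  · intro η _
    simp only [DXF, ccX, phi, Finset.sum_range_succ, Finset.sum_range_zero]
    field_simp
    ring
  · intro ξ _
    simp only [DYF, ccY, phi, Finset.sum_range_succ, Finset.sum_range_zero]
    field_simp
    ring
  · intro ξ _
    simp only [DYF, ccY, phi, Finset.sum_range_succ, Finset.sum_range_zero]
    field_simp
    ring
  · intro p _
    rw [DXF_deriv, DYF_deriv]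
    simp only [ccX, ccY]
    field_simp
    linear_combination (56448000 * (Δx+Δy)) * hcompat
  · rw [moment_eq]
    simp only [ccX, ccY]
    field_simp
    ring
  · rintro ⟨y1, y2⟩ ⟨hm1, hm2, hxp, hxm, hyq, hym, hdivu, hmomu⟩
    obtain ⟨e, rfl⟩ := DXF_rep y1 hm1
    obtain ⟨f, rfl⟩ := DYF_rep y2 hm2
    obtain ⟨h1, h2⟩ := uniq_coeffs Δx Δy hΔx hΔy ap am bp bm ω₁ e f hxp hxm hyq hym hdivu hmomu
    simp only [Prod.mk.injEq]
    exact ⟨h1, h2⟩
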